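/- Let p ∈ [0,1] and n a natural number. Then Σ_{k=0}^∞ | (np)^k/k! · e^{−np} − C(n,k)·p^k·(1−p)^{n−k} | ≤ 2p, where C(n,k) = 0 for k > n. (Total variation bound between Binomial(n,p) and Poisson(np).) -/

import Mathlib

open Finset

section aux
variable (lam : ℝ)

private noncomputable def qq (i : ℕ) : ℝ := lam ^ i / i.factorial

private noncomputable def QQ (m : ℕ) : ℝ := ∑ i ∈ Finset.range (m + 1), qq lam i

private lemma qq_zero : qq lam 0 = 1 := by simp [qq]

private lemma qq_nonneg (hlam : 0 ≤ lam) (i : ℕ) : 0 ≤ qq lam i := by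
  unfold qq; positivity

private lemma qq_succ (i : ℕ) : lam * qq lam i = ((i : ℝ) + 1) * qq lam (i + 1) := by
  unfold qq
  rw [Nat.factorial_succ]
  have h1 : (i.factorial : ℝ) ≠ 0 := by positivity
  push_cast
  field_simp
  ring

private lemma summable_qq : Summable (qq lam) := Real.summable_pow_div_factorial lam

private lemma tsum_qq : ∑' i, qq lam i = Real.exp lam := by
  rw [Real.exp_eq_exp_ℝ, NormedSpace.exp_eq_tsum_div]
  rfl

private lemma QQ_nonneg (hlam : 0 ≤ lam) (m : ℕ) : 0 ≤ QQ lam m :=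
  Finset.sum_nonneg fun i _ => qq_nonneg lam hlam i

private lemma ineq1 (hlam : 0 ≤ lam) (m : ℕ) :
    lam * QQ lam m ≤ ((m : ℝ) + 1) * QQ lam (m + 1) := by
  unfold QQ
  rw [Finset.mul_sum, Finset.mul_sum]
  have h1 : ∑ i ∈ Finset.range (m + 1), lam * qq lam i
      = ∑ i ∈ Finset.range (m + 2), (i : ℝ) * qq lam i := by
    rw [Finset.sum_range_succ' (fun i => (i : ℝ) * qq lam i) (m + 1)]
    simp only [Nat.cast_zero, zero_mul, add_zero, Nat.cast_add, Nat.cast_one]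
    exact Finset.sum_congr rfl fun i _ => by rw [qq_succ]
  rw [h1]
  apply Finset.sum_le_sum
  intro i hi
  have hile : (i : ℝ) ≤ (m : ℝ) + 1 := by
    have := Finset.mem_range.mp hi
    exact_mod_cast Nat.lt_succ_iff.mp (by omega)
  exact mul_le_mul_of_nonneg_right hile (qq_nonneg lam hlam i)

private lemma tail_eq (m : ℕ) : Real.exp lam - QQ lam m = ∑' i, qq lam (i + (m + 1)) := by
  have h := Summable.sum_add_tsum_nat_add (f := qq lam) (m + 1) (summable_qq lam)
  rw [tsum_qq] at h
  unfold QQ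
  linarith

private lemma ineq2 (hlam : 0 ≤ lam) (m : ℕ) :
    ((m : ℝ) + 1) * (Real.exp lam - QQ lam (m + 1)) ≤ lam * (Real.exp lam - QQ lam m) := by
  rw [tail_eq, tail_eq, ← tsum_mul_left, ← tsum_mul_left]
  have s2 : Summable (fun i => qq lam (i + (m + 1))) :=
    (summable_nat_add_iff (m + 1)).2 (summable_qq lam)
  have s1 : Summable (fun i => qq lam (i + (m + 2))) :=
    (summable_nat_add_iff (m + 2)).2 (summable_qq lam)
  apply Summable.tsum_le_tsum _ (s1.mul_left _) (s2.mul_left _)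
  intro i
  have e1 : i + (m + 2) = (i + (m + 1)) + 1 := by omega
  rw [e1]
  calc ((m : ℝ) + 1) * qq lam (i + (m + 1) + 1)
      ≤ ((i + (m + 1) : ℕ) + 1 : ℝ) * qq lam (i + (m + 1) + 1) := by
        apply mul_le_mul_of_nonneg_right _ (qq_nonneg lam hlam _)
        push_cast
        have : (0:ℝ) ≤ (i:ℝ) := Nat.cast_nonneg i
        linarith
    _ = lam * qq lam (i + (m + 1)) := (qq_succ lam _).symm
variable (A : Finset ℕ)

private noncomputable def SS (m : ℕ) : ℝ :=
  ∑ j ∈ A, qq lam j * ((if j ≤ m then (1:ℝ) else 0) - Real.exp (-lam) * QQ lam m)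

private noncomputable def ff : ℕ → ℝ
  | 0 => 0
  | (m+1) => ((m.factorial : ℝ) / lam ^ (m+1)) * SS lam A m

private lemma ff_succ (m : ℕ) :
    ff lam A (m+1) = ((m.factorial : ℝ) / lam ^ (m+1)) * SS lam A m := rfl

private lemma SS_eq (m : ℕ) :
    SS lam A m = ∑ i ∈ Finset.range (m + 1),
      ((if i ∈ A then (1:ℝ) else 0) - Real.exp (-lam) * ∑ j ∈ A, qq lam j) * qq lam i := by
  unfold SS
  have key : ∑ j ∈ A, (if j ≤ m then qq lam j else 0)
      = ∑ i ∈ Finset.range (m + 1), (if i ∈ A then qq lam i else 0) := by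
    rw [show (fun j => if j ≤ m then qq lam j else 0)
        = (fun j => if j ∈ Finset.range (m+1) then qq lam j else 0) from
      funext fun j => by simp [Finset.mem_range, Nat.lt_succ_iff]]
    rw [Finset.sum_ite_mem, Finset.sum_ite_mem, Finset.inter_comm]
  have lhs_eq : ∑ j ∈ A, qq lam j * ((if j ≤ m then (1:ℝ) else 0) - Real.exp (-lam) * QQ lam m)
      = (∑ j ∈ A, (if j ≤ m then qq lam j else 0))
        - (∑ j ∈ A, qq lam j) * (Real.exp (-lam) * QQ lam m) := by
    rw [Finset.sum_mul, ← Finset.sum_sub_distrib]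
    refine Finset.sum_congr rfl fun j _ => ?_
    by_cases h : j ≤ m <;> simp [h] <;> ring
  have rhs_eq : ∑ i ∈ Finset.range (m + 1),
      ((if i ∈ A then (1:ℝ) else 0) - Real.exp (-lam) * ∑ j ∈ A, qq lam j) * qq lam i
      = (∑ i ∈ Finset.range (m+1), (if i ∈ A then qq lam i else 0))
        - (Real.exp (-lam) * ∑ j ∈ A, qq lam j) * QQ lam m := by
    unfold QQ
    rw [Finset.mul_sum (s := Finset.range (m+1)), ← Finset.sum_sub_distrib]
    refine Finset.sum_congr rfl fun i _ => ?_
    by_cases h : i ∈ A <;> simp [h] <;> ring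
  rw [lhs_eq, rhs_eq, key]
  ring

private lemma stein (hlam : lam ≠ 0) (k : ℕ) :
    lam * ff lam A (k+1) - (k : ℝ) * ff lam A k
      = (if k ∈ A then (1:ℝ) else 0) - Real.exp (-lam) * ∑ j ∈ A, qq lam j := by
  match k with
  | 0 =>
    simp only [ff_succ, Nat.cast_zero, zero_mul, sub_zero, Nat.factorial_zero, Nat.cast_one]
    rw [SS_eq]
    simp only [zero_add, Finset.range_one, Finset.sum_singleton, qq_zero, mul_one, pow_one,
      one_div]
    rw [← mul_assoc, mul_inv_cancel₀ hlam, one_mul]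
  | (m+1) =>
    rw [ff_succ, ff_succ, SS_eq, SS_eq, Finset.sum_range_succ]
    have hpow : lam ^ (m+1) ≠ 0 := pow_ne_zero _ hlam
    have hpow2 : lam ^ (m+2) ≠ 0 := pow_ne_zero _ hlam
    have hfac : (m.factorial : ℝ) ≠ 0 := by positivity
    have hq : qq lam (m+1) = lam ^ (m+1) / (m+1).factorial := rfl
    have hfs : ((m+1).factorial : ℝ) = ((m:ℝ)+1) * m.factorial := by
      rw [Nat.factorial_succ]; push_cast; ring
    have hfs' : ((m+1).factorial : ℝ) ≠ 0 := by positivity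
    rw [hq, hfs]
    generalize (∑ x ∈ Finset.range (m+1),
      ((if x ∈ A then (1:ℝ) else 0) - Real.exp (-lam) * ∑ j ∈ A, qq lam j) * qq lam x) = Sg
    have hps : lam ^ (m+2) = lam ^ (m+1) * lam := by rw [pow_succ]
    field_simp
    push_cast
    ring

private lemma delta_bound (hlam : 0 < lam) (t : ℕ) :
    ff lam A (t+2) - ff lam A (t+1) ≤ 1 / lam := by
  have hlam' : lam ≠ 0 := ne_of_gt hlam
  have hE : (0:ℝ) < Real.exp (-lam) := Real.exp_pos _
  have hEexp : Real.exp (-lam) * Real.exp lam = 1 := by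
    rw [← Real.exp_add]; simp
  have decomp : ff lam A (t+2) - ff lam A (t+1)
      = ∑ j ∈ A, (qq lam j *
          (((((t+1).factorial : ℝ)) / lam ^ (t+2)) * ((if j ≤ t+1 then (1:ℝ) else 0)
              - Real.exp (-lam) * QQ lam (t+1))
            - (((t.factorial : ℝ)) / lam ^ (t+1)) * ((if j ≤ t then (1:ℝ) else 0)
              - Real.exp (-lam) * QQ lam t))) := by
    rw [ff_succ, ff_succ]
    unfold SS
    rw [Finset.mul_sum, Finset.mul_sum, ← Finset.sum_sub_distrib]
    exact Finset.sum_congr rfl fun j _ => by ring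
  rw [decomp]
  have bound : ∀ j ∈ A, qq lam j *
          (((((t+1).factorial : ℝ)) / lam ^ (t+2)) * ((if j ≤ t+1 then (1:ℝ) else 0)
              - Real.exp (-lam) * QQ lam (t+1))
            - (((t.factorial : ℝ)) / lam ^ (t+1)) * ((if j ≤ t then (1:ℝ) else 0)
              - Real.exp (-lam) * QQ lam t))
        ≤ (if j = t+1 then 1/lam else 0) := by
    intro j _
    have hfpos : (0:ℝ) < (t.factorial : ℝ) := by positivity
    have hfs : ((t+1).factorial : ℝ) = ((t:ℝ)+1) * t.factorial := by
      rw [Nat.factorial_succ]; push_cast; ring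
    have hps : lam ^ (t+2) = lam ^ (t+1) * lam := by rw [pow_succ]
    rcases eq_or_ne j (t+1) with hj | hj
    · -- j = t+1 case
      subst hj
      rw [if_pos (le_refl (t+1)), if_neg (Nat.not_succ_le_self t), if_pos rfl]
      have hq : qq lam (t+1) = lam ^ (t+1) / ((t+1).factorial : ℝ) := rfl
      have e1 : qq lam (t+1) * (((t+1).factorial : ℝ) / lam ^ (t+2)) = 1/lam := by
        rw [hq, hps]; field_simp
      have e2 : qq lam (t+1) * ((t.factorial : ℝ) / lam ^ (t+1)) = 1/((t:ℝ)+1) := by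
        rw [hq, hfs]
        have h1 : ((t:ℝ)+1) ≠ 0 := by positivity
        field_simp
      have expand : qq lam (t+1) *
          ((((t+1).factorial : ℝ) / lam ^ (t+2)) * (1 - Real.exp (-lam) * QQ lam (t+1))
            - ((t.factorial : ℝ) / lam ^ (t+1)) * (0 - Real.exp (-lam) * QQ lam t))
          = (qq lam (t+1) * (((t+1).factorial : ℝ) / lam ^ (t+2)))
              * (1 - Real.exp (-lam) * QQ lam (t+1))
            + (qq lam (t+1) * ((t.factorial : ℝ) / lam ^ (t+1)))
              * (Real.exp (-lam) * QQ lam t) := by ring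
      rw [expand, e1, e2]
      have key := ineq1 lam hlam.le t
      have key2 : lam * (Real.exp (-lam) * QQ lam t)
          ≤ ((t:ℝ)+1) * (Real.exp (-lam) * QQ lam (t+1)) := by nlinarith
      have ht1 : (0:ℝ) < (t:ℝ)+1 := by positivity
      rw [← sub_nonneg]
      have expand2 : 1/lam - (1/lam * (1 - Real.exp (-lam) * QQ lam (t+1))
            + 1/((t:ℝ)+1) * (Real.exp (-lam) * QQ lam t))
          = (((t:ℝ)+1) * (Real.exp (-lam) * QQ lam (t+1))
              - lam * (Real.exp (-lam) * QQ lam t)) / (lam * ((t:ℝ)+1)) := by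
        field_simp
        ring
      rw [expand2]
      apply div_nonneg (by linarith) (by positivity)
    · -- j ≠ t+1
      rw [if_neg hj]
      have hqj : (0:ℝ) ≤ qq lam j := qq_nonneg lam hlam.le j
      rcases le_or_gt j t with hjt | hjt
      · -- j ≤ t : both indicators are 1
        rw [if_pos (by omega : j ≤ t+1), if_pos hjt]
        have keyscalar : (((t:ℝ)+1)) * (1 - Real.exp (-lam) * QQ lam (t+1))
            ≤ lam * (1 - Real.exp (-lam) * QQ lam t) := by
          have h2 := ineq2 lam hlam.le t
          nlinarith
        have hbracket : (((t+1).factorial : ℝ) / lam ^ (t+2))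
              * (1 - Real.exp (-lam) * QQ lam (t+1))
            - ((t.factorial : ℝ) / lam ^ (t+1)) * (1 - Real.exp (-lam) * QQ lam t) ≤ 0 := by
          have hmul := mul_le_mul_of_nonneg_left keyscalar
            (show (0:ℝ) ≤ (t.factorial : ℝ) / lam ^ (t+2) by positivity)
          have eq1 : ((t.factorial : ℝ) / lam ^ (t+2)) * ((((t:ℝ)+1))
                * (1 - Real.exp (-lam) * QQ lam (t+1)))
              = (((t+1).factorial : ℝ) / lam ^ (t+2))
                * (1 - Real.exp (-lam) * QQ lam (t+1)) := by
            rw [hfs]; ring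
          have eq2 : ((t.factorial : ℝ) / lam ^ (t+2)) * (lam
                * (1 - Real.exp (-lam) * QQ lam t))
              = ((t.factorial : ℝ) / lam ^ (t+1)) * (1 - Real.exp (-lam) * QQ lam t) := by
            rw [hps]; field_simp
          rw [eq1, eq2] at hmul
          linarith
        have := mul_le_mul_of_nonneg_left hbracket hqj
        simpa using this
      · -- j > t+1 (since j ≠ t+1 and j > t)
        have hjt1 : ¬ (j ≤ t + 1) := by omega
        rw [if_neg hjt1, if_neg (by omega : ¬ j ≤ t)]
        have key := ineq1 lam hlam.le t
        have hbracket : (((t+1).factorial : ℝ) / lam ^ (t+2))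
              * (0 - Real.exp (-lam) * QQ lam (t+1))
            - ((t.factorial : ℝ) / lam ^ (t+1)) * (0 - Real.exp (-lam) * QQ lam t) ≤ 0 := by
          have hmul := mul_le_mul_of_nonneg_left key
            (show (0:ℝ) ≤ Real.exp (-lam) * ((t.factorial : ℝ) / lam ^ (t+2)) by positivity)
          rw [← sub_nonpos] at hmul ⊢
          have eqq : Real.exp (-lam) * ((t.factorial : ℝ) / lam ^ (t+2)) * (lam * QQ lam t)
                - Real.exp (-lam) * ((t.factorial : ℝ) / lam ^ (t+2))
                  * ((((t:ℝ)+1)) * QQ lam (t+1))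
              = (((t+1).factorial : ℝ) / lam ^ (t+2)) * (0 - Real.exp (-lam) * QQ lam (t+1))
                - ((t.factorial : ℝ) / lam ^ (t+1)) * (0 - Real.exp (-lam) * QQ lam t) := by
            rw [hfs, hps]; field_simp; ring
          linarith [eqq ▸ hmul]
        have := mul_le_mul_of_nonneg_left hbracket hqj
        simpa using this
  calc ∑ j ∈ A, (qq lam j *
          (((((t+1).factorial : ℝ)) / lam ^ (t+2)) * ((if j ≤ t+1 then (1:ℝ) else 0)
              - Real.exp (-lam) * QQ lam (t+1))
            - (((t.factorial : ℝ)) / lam ^ (t+1)) * ((if j ≤ t then (1:ℝ) else 0)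
              - Real.exp (-lam) * QQ lam t)))
      ≤ ∑ j ∈ A, (if j = t+1 then 1/lam else 0) := Finset.sum_le_sum bound
    _ ≤ 1/lam := by
        rw [Finset.sum_ite_eq' A (t+1) (fun _ => 1/lam)]
        split
        · exact le_refl _
        · positivity

end aux
theorem stmt7 (p : ℝ) (hp0 : 0 ≤ p) (hp1 : p ≤ 1) (n : ℕ) :
    ∑' k : ℕ, |((n : ℝ) * p) ^ k / (Nat.factorial k) * Real.exp (-((n : ℝ) * p))
      - (n.choose k : ℝ) * p ^ k * (1 - p) ^ (n - k)| ≤ 2 * p := by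
  rcases eq_or_lt_of_le hp0 with hp | hp
  · -- p = 0
    have hz : ∀ k : ℕ, |((n : ℝ) * p) ^ k / (Nat.factorial k) * Real.exp (-((n : ℝ) * p))
        - (n.choose k : ℝ) * p ^ k * (1 - p) ^ (n - k)| = 0 := by
      intro k
      rw [← hp]
      match k with
      | 0 => simp
      | (j+1) => simp
    rw [tsum_congr hz, tsum_zero, ← hp]
    norm_num
  rcases Nat.eq_zero_or_pos n with hn | hn
  · -- n = 0
    subst hn
    have hz : ∀ k : ℕ, |(((0:ℕ) : ℝ) * p) ^ k / (Nat.factorial k) * Real.exp (-(((0:ℕ) : ℝ) * p))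
        - ((Nat.choose 0 k : ℕ) : ℝ) * p ^ k * (1 - p) ^ (0 - k)| = 0 := by
      intro k
      match k with
      | 0 => simp
      | (j+1) => simp [Nat.choose_zero_succ]
    rw [tsum_congr hz, tsum_zero]
    linarith
  -- main case
  obtain ⟨m, rfl⟩ : ∃ m, n = m + 1 := ⟨n - 1, by omega⟩
  set lam : ℝ := ((m + 1 : ℕ) : ℝ) * p with hlam_def
  have hlam : 0 < lam := mul_pos (by positivity) hp
  have hld : lam = ((m:ℝ)+1) * p := by rw [hlam_def]; push_cast; ring
  have hlam' : lam ≠ 0 := ne_of_gt hlam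
  have h1p : 0 ≤ 1 - p := by linarith
  set a : ℕ → ℝ := fun k => qq lam k * Real.exp (-lam) with ha_def
  set b : ℕ → ℝ := fun k => ((m+1).choose k : ℝ) * p ^ k * (1 - p) ^ (m + 1 - k) with hb_def
  have ha_nonneg : ∀ k, 0 ≤ a k := fun k =>
    mul_nonneg (qq_nonneg lam hlam.le k) (Real.exp_pos _).le
  have hb_nonneg : ∀ k, 0 ≤ b k := fun k => by
    rw [hb_def]; positivity
  have hb_zero : ∀ k, k ∉ Finset.range (m + 2) → b k = 0 := by
    intro k hk
    rw [Finset.mem_range] at hk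
    rw [hb_def]
    simp only
    rw [Nat.choose_eq_zero_of_lt (by omega)]
    simp
  have summable_a : Summable a := (summable_qq lam).mul_right _
  have summable_b : Summable b := summable_of_ne_finset_zero hb_zero
  have tsum_a : ∑' k, a k = 1 := by
    rw [ha_def]
    simp only
    rw [tsum_mul_right, tsum_qq, ← Real.exp_add]
    simp
  have sum_b_range : ∑ k ∈ Finset.range (m + 2), b k = 1 := by
    have hap := add_pow p (1 - p) (m + 1)
    simp only [add_sub_cancel, one_pow] at hap
    calc ∑ k ∈ Finset.range (m + 2), b k
        = ∑ k ∈ Finset.range (m + 1 + 1), p ^ k * (1 - p) ^ (m + 1 - k) * ((m+1).choose k : ℝ) :=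
          Finset.sum_congr rfl fun k _ => by rw [hb_def]; ring
      _ = 1 := hap.symm
  have tsum_b : ∑' k, b k = 1 := by
    rw [tsum_eq_sum hb_zero]; exact sum_b_range
  -- pointwise abs identity
  have habs : ∀ k, |a k - b k| = 2 * max (b k - a k) 0 + (a k - b k) := by
    intro k
    rcases le_total (a k) (b k) with h | h
    · rw [abs_of_nonpos (by linarith), max_eq_left (by linarith)]; ring
    · rw [abs_of_nonneg (by linarith), max_eq_right (by linarith)]; ring
  have hmax_zero : ∀ k, k ∉ Finset.range (m + 2) → max (b k - a k) 0 = 0 := by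
    intro k hk
    rw [hb_zero k hk]
    exact max_eq_right (by linarith [ha_nonneg k])
  have summable_max : Summable (fun k => max (b k - a k) 0) :=
    summable_of_ne_finset_zero hmax_zero
  -- the statement's tsum equals tsum over |a - b|
  have hstmt : ∀ k : ℕ, |(((m+1:ℕ) : ℝ) * p) ^ k / (Nat.factorial k)
        * Real.exp (-(((m+1:ℕ) : ℝ) * p))
      - (((m+1).choose k : ℕ) : ℝ) * p ^ k * (1 - p) ^ (m + 1 - k)| = |a k - b k| := by
    intro k
    rfl
  rw [tsum_congr hstmt, tsum_congr habs,
    Summable.tsum_add (summable_max.mul_left 2) (summable_a.sub summable_b),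
    tsum_mul_left, Summable.tsum_sub summable_a summable_b, tsum_a, tsum_b]
  rw [tsum_eq_sum hmax_zero]
  -- reduce to the filtered sum
  set A : Finset ℕ := (Finset.range (m + 2)).filter (fun k => a k < b k) with hA_def
  have hAsub : A ⊆ Finset.range (m + 2) := Finset.filter_subset _ _
  have hsum_max : ∑ k ∈ Finset.range (m + 2), max (b k - a k) 0
      = ∑ k ∈ A, (b k - a k) := by
    rw [hA_def, Finset.sum_filter]
    refine Finset.sum_congr rfl fun k _ => ?_
    rcases lt_or_ge (a k) (b k) with h | h
    · rw [if_pos h, max_eq_left (by linarith)]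
    · rw [if_neg (not_lt.mpr h), max_eq_right (by linarith)]
  rw [hsum_max]
  -- suffices : the filtered sum is ≤ p
  suffices hkey : ∑ k ∈ A, (b k - a k) ≤ p by linarith
  -- Stein-Chen argument
  have step1 : ∑ k ∈ A, (b k - a k)
      = ∑ k ∈ Finset.range (m + 2), b k * ((if k ∈ A then (1:ℝ) else 0)
          - Real.exp (-lam) * ∑ j ∈ A, qq lam j) := by
    have h1 : ∑ k ∈ Finset.range (m + 2), b k * (if k ∈ A then (1:ℝ) else 0)
        = ∑ k ∈ A, b k := by
      have : ∀ k, b k * (if k ∈ A then (1:ℝ) else 0) = if k ∈ A then b k else 0 := by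
        intro k; split <;> simp
      rw [Finset.sum_congr rfl fun k _ => this k, Finset.sum_ite_mem,
        Finset.inter_eq_right.mpr hAsub]
    have h2 : ∑ k ∈ A, a k = Real.exp (-lam) * ∑ j ∈ A, qq lam j := by
      rw [Finset.mul_sum]
      exact Finset.sum_congr rfl fun k _ => mul_comm _ _
    calc ∑ k ∈ A, (b k - a k) = ∑ k ∈ A, b k - ∑ k ∈ A, a k := Finset.sum_sub_distrib _ _
      _ = ∑ k ∈ Finset.range (m + 2), b k * (if k ∈ A then (1:ℝ) else 0)
          - (∑ k ∈ Finset.range (m + 2), b k) * (Real.exp (-lam) * ∑ j ∈ A, qq lam j) := by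
          rw [h1, h2, sum_b_range, one_mul]
      _ = _ := by
          rw [Finset.sum_mul, ← Finset.sum_sub_distrib]
          exact Finset.sum_congr rfl fun k _ => by ring
  have step2 : ∑ k ∈ Finset.range (m + 2), b k * ((if k ∈ A then (1:ℝ) else 0)
          - Real.exp (-lam) * ∑ j ∈ A, qq lam j)
      = ∑ k ∈ Finset.range (m + 2), b k * (lam * ff lam A (k+1) - (k:ℝ) * ff lam A k) :=
    Finset.sum_congr rfl fun k _ => by rw [stein lam A hlam' k]
  -- binomial pmf of parameter m
  set c : ℕ → ℝ := fun t => ((m.choose t : ℕ) : ℝ) * p ^ t * (1 - p) ^ (m - t) with hc_def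
  have hc_nonneg : ∀ t, 0 ≤ c t := fun t => by rw [hc_def]; positivity
  have sum_c_range : ∑ t ∈ Finset.range (m + 1), c t = 1 := by
    have hap := add_pow p (1 - p) m
    simp only [add_sub_cancel, one_pow] at hap
    calc ∑ t ∈ Finset.range (m + 1), c t
        = ∑ t ∈ Finset.range (m + 1), p ^ t * (1 - p) ^ (m - t) * (m.choose t : ℝ) :=
          Finset.sum_congr rfl fun t _ => by rw [hc_def]; ring
      _ = 1 := hap.symm
  set T : ℝ := ∑ t ∈ Finset.range (m + 1), c t * ff lam A (t+1) with hT_def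
  set U : ℝ := ∑ t ∈ Finset.range (m + 1), c t * ff lam A (t+2) with hU_def
  have idA : ∑ k ∈ Finset.range (m + 2), b k * ((k:ℝ) * ff lam A k) = lam * T := by
    rw [Finset.sum_range_succ' (fun k => b k * ((k:ℝ) * ff lam A k)) (m+1)]
    simp only [Nat.cast_zero, zero_mul, mul_zero, add_zero]
    rw [hT_def, Finset.mul_sum]
    refine Finset.sum_congr rfl fun t ht => ?_
    have hcc := Nat.add_one_mul_choose_eq m t
    have hcast : (((m+1).choose (t+1) : ℕ) : ℝ) * ((t:ℝ)+1) = ((m:ℝ)+1) * ((m.choose t : ℕ) : ℝ) := by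
      have : ((m+1) * m.choose t : ℕ) = ((m+1).choose (t+1)) * (t+1) := hcc
      have h2 := congrArg (fun x : ℕ => (x : ℝ)) this
      push_cast at h2
      linarith
    rw [hb_def, hc_def]
    simp only
    rw [Nat.succ_sub_succ]
    push_cast
    have hcast2 : (((m+1:ℕ)) : ℝ) = (m:ℝ) + 1 := by push_cast; ring
    linear_combination (p ^ t * (1 - p) ^ (m - t) * p * ff lam A (t+1)) * hcast
      + (((m.choose t : ℕ) : ℝ) * p ^ t * (1 - p) ^ (m - t) * ff lam A (t+1)) * hld
      - (2 * p * p ^ t * ff lam A (t+1) * ((m.choose t : ℕ) : ℝ) * (1 - p) ^ (m - t)) * hcast2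
  have idB : ∑ k ∈ Finset.range (m + 2), b k * (lam * ff lam A (k+1))
      = lam * ((1-p) * T + p * U) := by
    have key : ∑ k ∈ Finset.range (m + 2), b k * ff lam A (k+1) = (1-p) * T + p * U := by
      rw [Finset.sum_range_succ' (fun k => b k * ff lam A (k+1)) (m+1)]
      have split : ∀ t ∈ Finset.range (m+1), b (t+1) * ff lam A (t+2)
          = ((m.choose t : ℕ) : ℝ) * p ^ (t+1) * (1-p) ^ (m-t) * ff lam A (t+2)
            + ((m.choose (t+1) : ℕ) : ℝ) * p ^ (t+1) * (1-p) ^ (m-t) * ff lam A (t+2) := by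
        intro t ht
        rw [hb_def]
        simp only
        rw [Nat.succ_sub_succ, Nat.choose_succ_succ]
        push_cast
        ring
      rw [Finset.sum_congr rfl split, Finset.sum_add_distrib]
      have part1 : ∑ t ∈ Finset.range (m+1),
          ((m.choose t : ℕ) : ℝ) * p ^ (t+1) * (1-p) ^ (m-t) * ff lam A (t+2) = p * U := by
        rw [hU_def, Finset.mul_sum]
        refine Finset.sum_congr rfl fun t _ => ?_
        rw [hc_def]
        simp only
        rw [pow_succ]
        ring
      have part2 : (∑ t ∈ Finset.range (m+1),
          ((m.choose (t+1) : ℕ) : ℝ) * p ^ (t+1) * (1-p) ^ (m-t) * ff lam A (t+2))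
            + b 0 * ff lam A 1 = (1-p) * T := by
        rw [hT_def, Finset.mul_sum,
          Finset.sum_range_succ' (fun s => (1-p) * (c s * ff lam A (s+1))) m]
        have last : ∑ t ∈ Finset.range (m+1),
            ((m.choose (t+1) : ℕ) : ℝ) * p ^ (t+1) * (1-p) ^ (m-t) * ff lam A (t+2)
            = ∑ t ∈ Finset.range m,
            ((m.choose (t+1) : ℕ) : ℝ) * p ^ (t+1) * (1-p) ^ (m-t) * ff lam A (t+2) := by
          rw [Finset.sum_range_succ, Nat.choose_succ_self]
          simp
        rw [last]
        have hb0 : b 0 * ff lam A 1 = (1-p) * (c 0 * ff lam A (0+1)) := by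
          rw [hb_def, hc_def]
          simp only [Nat.choose_zero_right, pow_zero, Nat.sub_zero, Nat.cast_one]
          ring
        rw [hb0]
        congr 1
        refine Finset.sum_congr rfl fun t ht => ?_
        rw [Finset.mem_range] at ht
        rw [hc_def]
        simp only
        have hsub : m - t = (m - (t+1)) + 1 := by omega
        rw [hsub, pow_succ]
        ring
      rw [part1]
      linarith [part2]
    calc ∑ k ∈ Finset.range (m + 2), b k * (lam * ff lam A (k+1))
        = lam * ∑ k ∈ Finset.range (m + 2), b k * ff lam A (k+1) := by
          rw [Finset.mul_sum]; exact Finset.sum_congr rfl fun k _ => by ring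
      _ = lam * ((1-p) * T + p * U) := by rw [key]
  rw [step1, step2]
  have expand : ∑ k ∈ Finset.range (m + 2), b k * (lam * ff lam A (k+1) - (k:ℝ) * ff lam A k)
      = lam * ((1-p) * T + p * U) - lam * T := by
    rw [← idA, ← idB, ← Finset.sum_sub_distrib]
    exact Finset.sum_congr rfl fun k _ => by ring
  rw [expand]
  have hUT : U - T ≤ 1 / lam := by
    have hsum : U - T = ∑ t ∈ Finset.range (m + 1), c t * (ff lam A (t+2) - ff lam A (t+1)) := by
      rw [hU_def, hT_def, ← Finset.sum_sub_distrib]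
      exact Finset.sum_congr rfl fun t _ => by ring
    rw [hsum]
    calc ∑ t ∈ Finset.range (m + 1), c t * (ff lam A (t+2) - ff lam A (t+1))
        ≤ ∑ t ∈ Finset.range (m + 1), c t * (1 / lam) :=
          Finset.sum_le_sum fun t _ =>
            mul_le_mul_of_nonneg_left (delta_bound lam A hlam t) (hc_nonneg t)
      _ = 1 / lam := by rw [← Finset.sum_mul, sum_c_range, one_mul]
  have final : lam * ((1-p) * T + p * U) - lam * T = lam * p * (U - T) := by ring
  rw [final]
  calc lam * p * (U - T) ≤ lam * p * (1 / lam) :=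
        mul_le_mul_of_nonneg_left hUT (by positivity)
    _ = p := by field_simp
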